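/- Suppose a is a Barker sequence of even length n ≥ 4 such that C_1(a) = C_3(a) = ⋯ = C_{n/2−1}(a) (all the aperiodic autocorrelations at odd shifts below n/2 are equal). Then n = 4. -/

import Mathlib

set_option linter.unusedTactic false

open Finset

section Aux

lemma pm_sum_prod : ∀ (S : Finset ℕ) (b : ℕ → ℤ), (∀ j ∈ S, b j = 1 ∨ b j = -1) →
    ∃ m : ℕ, (∑ j ∈ S, b j) = (S.card : ℤ) - 2 * m ∧ (∏ j ∈ S, b j) = (-1)^m := by
  intro S
  induction S using Finset.induction_on with
  | empty => intro b _; exact ⟨0, by simp⟩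
  | @insert x s hx ih =>
    intro b hb
    obtain ⟨m, hs, hp⟩ := ih b (fun j hj => hb j (mem_insert_of_mem hj))
    rcases hb _ (mem_insert_self _ _) with h1 | h1
    · refine ⟨m, ?_, ?_⟩
      · rw [sum_insert hx, h1, card_insert_of_notMem hx]; push_cast; linarith
      · rw [prod_insert hx, h1, one_mul, hp]
    · refine ⟨m + 1, ?_, ?_⟩
      · rw [sum_insert hx, h1, card_insert_of_notMem hx]; push_cast; linarith
      · rw [prod_insert hx, h1, hp, pow_succ]; ring

lemma prod_shift (b : ℕ → ℤ) (c k : ℕ) :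
    ∏ j ∈ Icc 1 c, b (j + k) = ∏ j ∈ Icc (1 + k) (c + k), b j := by
  rw [← map_add_right_Icc 1 c k, Finset.prod_map]; rfl

lemma sum_reflect {α : Type*} [AddCommMonoid α] (b : ℕ → α) (N : ℕ) :
    ∑ j ∈ Icc 1 N, b j = ∑ j ∈ Icc 1 N, b (N + 1 - j) := by
  refine Finset.sum_nbij' (fun j => N + 1 - j) (fun j => N + 1 - j) ?_ ?_ ?_ ?_ ?_
  · intro a ha; simp only [mem_Icc] at *; omega
  · intro a ha; simp only [mem_Icc] at *; omega
  · intro a ha; simp only [mem_Icc] at *; omega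
  · intro a ha; simp only [mem_Icc] at *; omega
  · intro a ha; simp only [mem_Icc] at ha
    show b a = b (N + 1 - (N + 1 - a))
    congr 1; omega

lemma sum_mul_sum_corr {α : Type*} [CommRing α] (b c : ℕ → α) :
    ∀ N : ℕ, (∑ j ∈ Icc 1 N, b j) * (∑ l ∈ Icc 1 N, c l)
      = (∑ j ∈ Icc 1 N, b j * c j)
        + ∑ k ∈ Icc 1 (N - 1), ∑ j ∈ Icc 1 (N - k), (b (j + k) * c j + b j * c (j + k)) := by
  intro N
  induction N with
  | zero => simp
  | succ N ih =>
    rcases Nat.eq_zero_or_pos N with rfl | hN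
    · simp
    rw [sum_Icc_succ_top (by omega) b, sum_Icc_succ_top (by omega) c,
        sum_Icc_succ_top (by omega) (fun j => b j * c j)]
    have hcross : ∑ k ∈ Icc 1 (N + 1 - 1), ∑ j ∈ Icc 1 (N + 1 - k), (b (j + k) * c j + b j * c (j + k))
        = (∑ k ∈ Icc 1 (N - 1), ∑ j ∈ Icc 1 (N - k), (b (j + k) * c j + b j * c (j + k)))
          + ∑ l ∈ Icc 1 N, (b (N + 1) * c l + b l * c (N + 1)) := by
      have h1 : ∀ k ∈ Icc 1 N, ∑ j ∈ Icc 1 (N + 1 - k), (b (j + k) * c j + b j * c (j + k))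
          = (∑ j ∈ Icc 1 (N - k), (b (j + k) * c j + b j * c (j + k)))
            + (b (N + 1) * c (N + 1 - k) + b (N + 1 - k) * c (N + 1)) := by
        intro k hk
        simp only [mem_Icc] at hk
        have e1 : N + 1 - k = (N - k) + 1 := by omega
        rw [e1, sum_Icc_succ_top (by omega)]
        have e2 : N - k + 1 + k = N + 1 := by omega
        rw [e2, ← e1]
      have e0 : N + 1 - 1 = N := by omega
      rw [e0, Finset.sum_congr rfl h1, Finset.sum_add_distrib]
      congr 1
      · have eN : N = (N - 1) + 1 := by omega
        rw [eN, sum_Icc_succ_top (by omega)]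
        simp [Nat.sub_self]
      · rw [sum_reflect (fun l => b (N + 1) * c l + b l * c (N + 1)) N]
    have hsum : ∑ l ∈ Icc 1 N, (b (N + 1) * c l + b l * c (N + 1))
        = b (N + 1) * (∑ l ∈ Icc 1 N, c l) + (∑ l ∈ Icc 1 N, b l) * c (N + 1) := by
      rw [Finset.sum_add_distrib, mul_sum, sum_mul]
    rw [hcross, hsum]
    linear_combination ih

lemma neg_one_pow_congr' (e f : ℕ) (h : e % 2 = f % 2) : (-1 : ℤ)^e = (-1)^f := by
  rcases Nat.even_or_odd e with he | he
  · have hf : Even f := by rcases he with ⟨r, hr⟩; exact ⟨f/2, by omega⟩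
    rw [he.neg_one_pow, hf.neg_one_pow]
  · have hf : Odd f := by rcases he with ⟨r, hr⟩; exact ⟨f/2, by omega⟩
    rw [he.neg_one_pow, hf.neg_one_pow]

end Aux

section Gauss

local notation "I" => (Zsqrtd.sqrtd : GaussianInt)

lemma hI2 : I * I = -1 := by ext <;> simp
lemma hI4 : I ^ 4 = 1 := by
  have : I^4 = (I*I)*(I*I) := by ring
  rw [this, hI2]; ring
lemma hIpow (k : ℕ) : I ^ k = I ^ (k % 4) := by
  conv_lhs => rw [← Nat.div_add_mod k 4]
  rw [pow_add, pow_mul, hI4, one_pow, one_mul]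
lemma hInegI : I * (-I) = 1 := by rw [mul_neg, hI2]; ring
lemma hIpow_negpow (j : ℕ) : I^j * (-I)^j = 1 := by rw [← mul_pow, hInegI, one_pow]
lemma starI : star I = -I := by ext <;> simp
lemma negII : (-I) * I = 1 := by rw [mul_comm]; exact hInegI
lemma pow_collapse (x y : GaussianInt) (h : x * y = 1) (j k : ℕ) : x^(j+k) * y^j = x^k := by
  rw [pow_add, show x^j * x^k * y^j = (x^j * y^j) * x^k from by ring, ← mul_pow, h, one_pow,
    one_mul]
lemma hI3 : I^3 = -I := by
  rw [show (I:GaussianInt)^3 = (I*I)*I from by ring, hI2]; ring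

/-- the alternating partial sums of -4*I^k over odd k -/
noncomputable def qfun : ℕ → GaussianInt :=
  fun k => if k % 4 = 1 then -4*I else if k % 4 = 3 then 4*I else 0

lemma sumq : ∀ R : ℕ, ∑ k ∈ Icc 1 R, qfun k
    = if R % 4 = 1 ∨ R % 4 = 2 then -4*I else 0 := by
  intro R
  induction R with
  | zero => simp
  | succ R ih =>
    rw [sum_Icc_succ_top (by omega), ih]
    have h4 : R % 4 = 0 ∨ R % 4 = 1 ∨ R % 4 = 2 ∨ R % 4 = 3 := by omega
    rcases h4 with h | h | h | h
    · have h1 : (R+1) % 4 = 1 := by omega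
      simp [qfun, h, h1]
    · have h1 : (R+1) % 4 = 2 := by omega
      simp [qfun, h, h1]
    · have h1 : (R+1) % 4 = 3 := by omega
      simp [qfun, h, h1]
    · have h1 : (R+1) % 4 = 0 := by omega
      simp [qfun, h, h1]

end Gauss

/-- The `k`th aperiodic autocorrelation of the sequence `a` of length `n`:
`C_k(a) = ∑_{j=1}^{n-k} a_j a_{j+k}`. -/
def aperiodicCorr (a : ℕ → ℤ) (n k : ℕ) : ℤ :=
  ∑ j ∈ Finset.Icc 1 (n - k), a j * a (j + k)

set_option maxHeartbeats 2000000 in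
theorem stmt_5 (n : ℕ) (hn : 4 ≤ n) (hne : Even n) (a : ℕ → ℤ)
    (ha : ∀ j, 1 ≤ j → j ≤ n → a j = 1 ∨ a j = -1)
    (hbarker : ∀ k, 1 ≤ k → k ≤ n - 1 → aperiodicCorr a n k ∈ ({-1, 0, 1} : Set ℤ))
    (heq : ∀ k, Odd k → 1 ≤ k → k < n / 2 → aperiodicCorr a n k = aperiodicCorr a n 1) :
    n = 4 := by
  set C : ℕ → ℤ := aperiodicCorr a n with hCdef
  have hnpar : n % 2 = 0 := Nat.even_iff.mp hne
  obtain ⟨M, hM⟩ : ∃ M, n = 2 * M := ⟨n / 2, by omega⟩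
  have hM2 : 2 ≤ M := by omega
  have hn2 : n / 2 = M := by omega
  -- each term of a correlation is ±1
  have hterm : ∀ k j, 1 ≤ j → j ≤ n - k → (a j * a (j + k) = 1 ∨ a j * a (j + k) = -1) := by
    intro k j h1 h2
    rcases ha j (by omega) (by omega) with h | h <;>
      rcases ha (j + k) (by omega) (by omega) with h' | h' <;> rw [h, h'] <;> norm_num
  have hpm : ∀ k, ∃ m : ℕ, C k = ((n - k : ℕ) : ℤ) - 2 * m ∧
      (∏ j ∈ Finset.Icc 1 (n - k), (a j * a (j + k))) = (-1) ^ m := by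
    intro k
    have h := pm_sum_prod (Finset.Icc 1 (n - k)) (fun j => a j * a (j + k))
      (by intro j hj; simp only [Finset.mem_Icc] at hj; exact hterm k j hj.1 hj.2)
    simpa [hCdef, aperiodicCorr, Nat.card_Icc] using h
  -- even shifts vanish
  have heven0 : ∀ k, 2 ≤ k → k ≤ n - 2 → k % 2 = 0 → C k = 0 := by
    intro k h2 hk2 hpar
    obtain ⟨m, hm, -⟩ := hpm k
    have hb := hbarker k (by omega) (by omega)
    simp only [Set.mem_insert_iff, Set.mem_singleton_iff] at hb
    omega
  -- odd shifts are ±1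
  have hodd1 : ∀ k, k ≤ n - 1 → k % 2 = 1 → C k = 1 ∨ C k = -1 := by
    intro k hk hpar
    obtain ⟨m, hm, -⟩ := hpm k
    have hb := hbarker k (by omega) (by omega)
    simp only [Set.mem_insert_iff, Set.mem_singleton_iff] at hb
    omega
  -- the full sequence product is ±1, squared is 1
  have hsq : ((∏ j ∈ Finset.Icc 1 n, a j))^2 = 1 := by
    obtain ⟨m0, -, hp0⟩ := pm_sum_prod (Finset.Icc 1 n) a
      (by intro j hj; simp only [Finset.mem_Icc] at hj; exact ha j hj.1 hj.2)
    rw [hp0, ← pow_mul, mul_comm, pow_mul]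
    norm_num
  -- Icc to Ioc conversion
  have hIoc : ∀ x : ℕ, Finset.Icc 1 x = Finset.Ioc 0 x := fun x => Finset.Icc_add_one_left_eq_Ioc 0 x
  have hIoc' : ∀ x y : ℕ, Finset.Icc (1 + x) y = Finset.Ioc x y := by
    intro x y; rw [Nat.add_comm]; exact Finset.Icc_add_one_left_eq_Ioc x y
  -- periodic complement identity
  have hcyc : ∀ k, 1 ≤ k → k ≤ n - 1 → ∃ m : ℕ, C k + C (n - k) = (n : ℤ) - 4 * m := by
    intro k h1 h2
    obtain ⟨m1, hm1, hp1⟩ := hpm k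
    obtain ⟨m2, hm2, hp2⟩ := hpm (n - k)
    have enk : n - (n - k) = k := by omega
    rw [enk] at hm2 hp2
    have hsplit1 : (∏ j ∈ Finset.Icc 1 (n - k), (a j * a (j + k)))
        = (∏ j ∈ Finset.Ioc 0 (n - k), a j) * (∏ j ∈ Finset.Ioc k n, a j) := by
      rw [Finset.prod_mul_distrib, prod_shift, show n - k + k = n from by omega, hIoc, hIoc']
    have hsplit2 : (∏ j ∈ Finset.Icc 1 k, (a j * a (j + (n - k))))
        = (∏ j ∈ Finset.Ioc 0 k, a j) * (∏ j ∈ Finset.Ioc (n - k) n, a j) := by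
      rw [Finset.prod_mul_distrib, prod_shift, show k + (n - k) = n from by omega, hIoc, hIoc']
    have hc1 : (∏ j ∈ Finset.Ioc 0 (n - k), a j) * (∏ j ∈ Finset.Ioc (n - k) n, a j)
        = ∏ j ∈ Finset.Ioc 0 n, a j := Finset.prod_Ioc_consecutive a (by omega) (by omega)
    have hc2 : (∏ j ∈ Finset.Ioc 0 k, a j) * (∏ j ∈ Finset.Ioc k n, a j)
        = ∏ j ∈ Finset.Ioc 0 n, a j := Finset.prod_Ioc_consecutive a (by omega) (by omega)
    have hmm : (-1 : ℤ)^(m1 + m2) = 1 := by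
      rw [pow_add, ← hp1, ← hp2, hsplit1, hsplit2]
      calc (∏ j ∈ Finset.Ioc 0 (n-k), a j) * (∏ j ∈ Finset.Ioc k n, a j) *
            ((∏ j ∈ Finset.Ioc 0 k, a j) * (∏ j ∈ Finset.Ioc (n-k) n, a j))
          = ((∏ j ∈ Finset.Ioc 0 (n-k), a j) * (∏ j ∈ Finset.Ioc (n-k) n, a j)) *
            ((∏ j ∈ Finset.Ioc 0 k, a j) * (∏ j ∈ Finset.Ioc k n, a j)) := by ring
        _ = ((∏ j ∈ Finset.Ioc 0 n, a j))^2 := by rw [hc1, hc2]; ring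
        _ = 1 := by rw [← hIoc]; exact hsq
    have heven : (m1 + m2) % 2 = 0 := by
      rcases Nat.even_or_odd (m1 + m2) with h | h
      · exact Nat.even_iff.mp h
      · rw [h.neg_one_pow] at hmm; norm_num at hmm
    refine ⟨(m1 + m2) / 2, ?_⟩
    have hc1' : ((n - k : ℕ) : ℤ) + (k : ℤ) = n := by
      have : k ≤ n := by omega
      push_cast [this]; ring
    have hc2' : 2 * ((m1 : ℤ) + (m2 : ℤ)) = 4 * (((m1 + m2) / 2 : ℕ) : ℤ) := by omega
    rw [hm1, hm2]
    push_cast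
    push_cast at hc1' hc2'
    linarith
  -- 4 divides n
  have h4n : n % 4 = 0 := by
    obtain ⟨m, hm⟩ := hcyc 2 (by omega) (by omega)
    have h2 : C 2 = 0 := heven0 2 le_rfl (by omega) rfl
    have h2' : C (n - 2) = 0 := heven0 (n - 2) (by omega) (by omega) (by omega)
    rw [h2, h2'] at hm
    omega
  have hMev : M % 2 = 0 := by omega
  set ε : ℤ := C 1 with hεdef
  have hε : ε = 1 ∨ ε = -1 := hodd1 1 (by omega) rfl
  have hε2 : ε * ε = 1 := by rcases hε with h | h <;> rw [h] <;> norm_num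
  have hlow : ∀ k, k % 2 = 1 → k < M → C k = ε := by
    intro k hk1 hkM
    exact heq k (Nat.odd_iff.mpr hk1) (by omega) (by omega)
  have hhigh : ∀ k, k % 2 = 1 → M < k → k ≤ n - 1 → C k = -ε := by
    intro k hk1 hkM hkn
    obtain ⟨m, hm⟩ := hcyc k (by omega) hkn
    have hlo : C (n - k) = ε := hlow (n - k) (by omega) (by omega)
    have hko : C k = 1 ∨ C k = -1 := hodd1 k hkn hk1
    have hn4 : (n : ℤ) = 4 * (n / 4 : ℕ) := by omega
    rw [hlo] at hm
    have h0 : C k + ε = 4 * ((n / 4 : ℕ) : ℤ) - 4 * (m : ℤ) := by rw [← hn4]; linarith [hm]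
    rcases hε with h | h <;> rcases hko with h' | h' <;> rw [h', h] <;> rw [h', h] at h0 <;> omega
  have hCn0 : C n = 0 := by
    have : C n = ∑ j ∈ Finset.Icc 1 (n - n), a j * a (j + n) := rfl
    rw [this, Nat.sub_self]
    simp
  -- row products
  have hrow : ∀ t, t ≤ n → ∃ m : ℕ, ((t : ℤ) - C (n - t) = 2 * m) ∧
      (∏ j ∈ Finset.Icc 1 t, a j) * (∏ j ∈ Finset.Icc (n - t + 1) n, a j) = (-1) ^ m := by
    intro t ht
    obtain ⟨m, hm, hp⟩ := hpm (n - t)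
    have e : n - (n - t) = t := by omega
    rw [e] at hm hp
    refine ⟨m, by rw [hm]; push_cast; ring, ?_⟩
    rw [← hp, Finset.prod_mul_distrib, prod_shift,
      show 1 + (n - t) = n - t + 1 from by omega, show t + (n - t) = n from by omega]
  -- squares of partial products
  have hppm : ∀ (s : Finset ℕ), (∀ j ∈ s, 1 ≤ j ∧ j ≤ n) → (∏ j ∈ s, a j) * (∏ j ∈ s, a j) = 1 := by
    intro s hs
    obtain ⟨m0, -, hp0⟩ := pm_sum_prod s a (by intro j hj; exact ha j (hs j hj).1 (hs j hj).2)
    rw [hp0, ← pow_add]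
    exact Even.neg_one_pow ⟨m0, rfl⟩
  -- the symmetry
  have hsym : ∀ t, 1 ≤ t → t ≤ M → a (n + 1 - t) = ε * (-1) ^ t * a t := by
    intro t h1 htM
    obtain ⟨m1, hm1, hp1⟩ := hrow t (by omega)
    obtain ⟨m0, hm0, hp0⟩ := hrow (t - 1) (by omega)
    have hpair : C (n - t) + C (n - (t - 1)) = -ε := by
      rcases Nat.even_or_odd t with hte | hto
      · have hte' : t % 2 = 0 := Nat.even_iff.mp hte
        have ht2 : 2 ≤ t := by omega
        have e1 : C (n - t) = 0 := heven0 _ (by omega) (by omega) (by omega)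
        have e2 : C (n - (t - 1)) = -ε := by
          rw [show n - (t - 1) = n - t + 1 from by omega]
          exact hhigh _ (by omega) (by omega) (by omega)
        rw [e1, e2]; ring
      · have hto' : t % 2 = 1 := Nat.odd_iff.mp hto
        have e1 : C (n - t) = -ε := hhigh _ (by omega) (by omega) (by omega)
        have e2 : C (n - (t - 1)) = 0 := by
          rcases eq_or_lt_of_le h1 with h | h
          · rw [show n - (t - 1) = n from by omega]; exact hCn0
          · exact heven0 _ (by omega) (by omega) (by omega)
        rw [e1, e2]; ring
    have hsplitA : (∏ j ∈ Finset.Icc 1 t, a j) = (∏ j ∈ Finset.Icc 1 (t - 1), a j) * a t := by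
      conv_lhs => rw [show t = (t - 1) + 1 from by omega]
      rw [Finset.prod_Icc_succ_top (by omega), show t - 1 + 1 = t from by omega]
    have hins : Finset.Icc (n - t + 1) n = insert (n - t + 1) (Finset.Icc (n - (t - 1) + 1) n) := by
      ext x
      simp only [Finset.mem_Icc, Finset.mem_insert]
      omega
    have hsplitB : (∏ j ∈ Finset.Icc (n - t + 1) n, a j)
        = a (n - t + 1) * (∏ j ∈ Finset.Icc (n - (t - 1) + 1) n, a j) := by
      rw [hins, Finset.prod_insert (by simp only [Finset.mem_Icc]; omega)]
    have key : a t * a (n + 1 - t) = (-1 : ℤ) ^ (m1 + m0) := by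
      have e : n + 1 - t = n - t + 1 := by omega
      rw [e, pow_add, ← hp1, ← hp0, hsplitA, hsplitB]
      have hA := hppm (Finset.Icc 1 (t - 1)) (by intro j hj; simp only [Finset.mem_Icc] at hj; omega)
      have hB := hppm (Finset.Icc (n - (t - 1) + 1) n) (by intro j hj; simp only [Finset.mem_Icc] at hj; omega)
      calc a t * a (n - t + 1)
          = (a t * a (n - t + 1)) *
            (((∏ j ∈ Finset.Icc 1 (t-1), a j) * (∏ j ∈ Finset.Icc 1 (t-1), a j)) *
             ((∏ j ∈ Finset.Icc (n - (t-1) + 1) n, a j) * (∏ j ∈ Finset.Icc (n - (t-1) + 1) n, a j))) := by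
            rw [hA, hB]; ring
        _ = (∏ j ∈ Finset.Icc 1 (t-1), a j) * a t * (a (n - t + 1) * ∏ j ∈ Finset.Icc (n - (t-1) + 1) n, a j) *
            ((∏ j ∈ Finset.Icc 1 (t-1), a j) * ∏ j ∈ Finset.Icc (n - (t-1) + 1) n, a j) := by ring
    have hexp : 2 * ((m1 : ℤ) + m0) = 2 * t - 1 + ε := by
      have c0 : ((t - 1 : ℕ) : ℤ) = (t : ℤ) - 1 := by omega
      rw [c0] at hm0
      linarith [hm1, hm0, hpair]
    have hat : a t = 1 ∨ a t = -1 := ha t (by omega) (by omega)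
    rcases hε with he | he
    · have hnat : m1 + m0 = t := by
        have : (m1 : ℤ) + m0 = t := by rw [he] at hexp; linarith
        exact_mod_cast this
      rw [hnat] at key
      rw [he, one_mul]
      rcases hat with h | h <;> rw [h] at key ⊢ <;> linarith [key]
    · have hnat : m1 + m0 = t - 1 := by
        have : (m1 : ℤ) + m0 = (t : ℤ) - 1 := by rw [he] at hexp; linarith
        omega
      have hpw : (-1 : ℤ) ^ (m1 + m0) = -(-1 : ℤ) ^ t := by
        rw [hnat]
        have : (-1 : ℤ) ^ t = (-1 : ℤ) ^ ((t - 1) + 1) := by rw [show t - 1 + 1 = t from by omega]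
        rw [this, pow_succ]
        ring
      rw [hpw] at key
      rw [he]
      rcases hat with h | h <;> rw [h] at key ⊢ <;> linarith [key]
  -- Gaussian integer phase
  have h20 : (2 : GaussianInt) ≠ 0 := by
    intro h
    have := congrArg Zsqrtd.re h
    simp at this
  have hIn : (Zsqrtd.sqrtd : GaussianInt) ^ n = 1 := by
    rw [hIpow, show n % 4 = 0 from h4n, pow_zero]
  have hpowc : ∀ u, u ≤ n + 1 →
      ((-1 : GaussianInt)) ^ u * (Zsqrtd.sqrtd : GaussianInt) ^ (n + 1 - u)
        = (Zsqrtd.sqrtd : GaussianInt) * (Zsqrtd.sqrtd : GaussianInt) ^ u := by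
    intro u hu
    have h1 : ((-1 : GaussianInt)) ^ u = ((Zsqrtd.sqrtd : GaussianInt) * Zsqrtd.sqrtd) ^ u := by
      rw [hI2]
    rw [h1, mul_pow, mul_assoc, ← pow_add, show u + (n + 1 - u) = n + 1 from by omega,
      pow_succ, hIn, one_mul]
    ring
  set z : GaussianInt := ∑ t ∈ Finset.Icc 1 M, (a t : GaussianInt) * (Zsqrtd.sqrtd : GaussianInt) ^ t with hz
  set F : GaussianInt := ∑ j ∈ Finset.Icc 1 n, (a j : GaussianInt) * (Zsqrtd.sqrtd : GaussianInt) ^ j with hF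
  have hhalf : ∑ j ∈ Finset.Icc (M + 1) n, (a j : GaussianInt) * (Zsqrtd.sqrtd : GaussianInt) ^ j
      = (ε : GaussianInt) * (Zsqrtd.sqrtd : GaussianInt) * z := by
    rw [hz, Finset.mul_sum]
    refine Finset.sum_nbij' (fun j => n + 1 - j) (fun u => n + 1 - u) ?_ ?_ ?_ ?_ ?_
    · intro j hj; simp only [Finset.mem_Icc] at *; omega
    · intro u hu; simp only [Finset.mem_Icc] at *; omega
    · intro j hj; simp only [Finset.mem_Icc] at hj
      show n + 1 - (n + 1 - j) = j
      omega
    · intro u hu; simp only [Finset.mem_Icc] at hu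
      show n + 1 - (n + 1 - u) = u
      omega
    · intro j hj
      simp only [Finset.mem_Icc] at hj
      show (a j : GaussianInt) * _ = (ε : GaussianInt) * Zsqrtd.sqrtd *
        ((a (n + 1 - j) : GaussianInt) * (Zsqrtd.sqrtd : GaussianInt) ^ (n + 1 - j))
      have hsymj : a j = ε * (-1 : ℤ) ^ (n + 1 - j) * a (n + 1 - j) := by
        have h := hsym (n + 1 - j) (by omega) (by omega)
        rw [show n + 1 - (n + 1 - j) = j from by omega] at h
        rw [h]
      rw [hsymj]
      push_cast
      rw [show ((ε : GaussianInt) * (-1) ^ (n + 1 - j) * (a (n + 1 - j) : GaussianInt)) *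
            (Zsqrtd.sqrtd : GaussianInt) ^ j
          = (ε : GaussianInt) * (a (n + 1 - j) : GaussianInt) *
            ((-1 : GaussianInt) ^ (n + 1 - j) * (Zsqrtd.sqrtd : GaussianInt) ^ (n + 1 - (n + 1 - j))) from by
            rw [show n + 1 - (n + 1 - j) = j from by omega]; ring,
        hpowc (n + 1 - j) (by omega)]
      ring
  have hFz : F = (1 + (ε : GaussianInt) * Zsqrtd.sqrtd) * z := by
    have hsplitF : F = z + ∑ j ∈ Finset.Icc (M + 1) n, (a j : GaussianInt) * (Zsqrtd.sqrtd : GaussianInt) ^ j := by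
      rw [hF, hz, hIoc, hIoc, Finset.Icc_add_one_left_eq_Ioc,
        ← Finset.sum_Ioc_consecutive _ (by omega : 0 ≤ M) (by omega : M ≤ n)]
    rw [hsplitF, hhalf]
    ring
  -- F * star F = n
  have hstarF : star F = ∑ j ∈ Finset.Icc 1 n, (a j : GaussianInt) * (-(Zsqrtd.sqrtd : GaussianInt)) ^ j := by
    rw [hF, star_sum]
    refine Finset.sum_congr rfl (fun j _ => ?_)
    rw [star_mul', star_pow, starI, star_intCast]
  have hFF : F * star F = ((n : ℤ) : GaussianInt) := by
    rw [hF, hstarF, sum_mul_sum_corr]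
    have hdiag : ∑ j ∈ Finset.Icc 1 n,
        ((a j : GaussianInt) * (Zsqrtd.sqrtd : GaussianInt) ^ j) *
          ((a j : GaussianInt) * (-(Zsqrtd.sqrtd : GaussianInt)) ^ j) = ((n : ℤ) : GaussianInt) := by
      have hone : ∀ j ∈ Finset.Icc 1 n, ((a j : GaussianInt) * (Zsqrtd.sqrtd : GaussianInt) ^ j) *
          ((a j : GaussianInt) * (-(Zsqrtd.sqrtd : GaussianInt)) ^ j) = 1 := by
        intro j hj
        simp only [Finset.mem_Icc] at hj
        have h1 : ((a j : GaussianInt) * (Zsqrtd.sqrtd : GaussianInt) ^ j) *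
            ((a j : GaussianInt) * (-(Zsqrtd.sqrtd : GaussianInt)) ^ j)
            = ((a j * a j : ℤ) : GaussianInt) *
              ((Zsqrtd.sqrtd : GaussianInt) ^ j * (-(Zsqrtd.sqrtd : GaussianInt)) ^ j) := by
          push_cast; ring
        have h2 : a j * a j = 1 := by rcases ha j hj.1 hj.2 with h | h <;> rw [h] <;> norm_num
        rw [h1, hIpow_negpow, h2]
        simp
      rw [Finset.sum_congr rfl hone, Finset.sum_const, Nat.card_Icc]
      simp
    have hcross : ∀ k ∈ Finset.Icc 1 (n - 1), ∑ j ∈ Finset.Icc 1 (n - k),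
        (((a (j + k) : GaussianInt) * (Zsqrtd.sqrtd : GaussianInt) ^ (j + k)) *
            ((a j : GaussianInt) * (-(Zsqrtd.sqrtd : GaussianInt)) ^ j)
          + ((a j : GaussianInt) * (Zsqrtd.sqrtd : GaussianInt) ^ j) *
            ((a (j + k) : GaussianInt) * (-(Zsqrtd.sqrtd : GaussianInt)) ^ (j + k))) = 0 := by
      intro k hk
      simp only [Finset.mem_Icc] at hk
      have hterm2 : ∀ j, ((a (j + k) : GaussianInt) * (Zsqrtd.sqrtd : GaussianInt) ^ (j + k)) *
            ((a j : GaussianInt) * (-(Zsqrtd.sqrtd : GaussianInt)) ^ j)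
          + ((a j : GaussianInt) * (Zsqrtd.sqrtd : GaussianInt) ^ j) *
            ((a (j + k) : GaussianInt) * (-(Zsqrtd.sqrtd : GaussianInt)) ^ (j + k))
          = ((a j * a (j + k) : ℤ) : GaussianInt) *
              ((Zsqrtd.sqrtd : GaussianInt) ^ k + (-(Zsqrtd.sqrtd : GaussianInt)) ^ k) := by
        intro j
        have e1 : (Zsqrtd.sqrtd : GaussianInt) ^ (j + k) * (-(Zsqrtd.sqrtd : GaussianInt)) ^ j
            = (Zsqrtd.sqrtd : GaussianInt) ^ k := by
          rw [pow_add, show (Zsqrtd.sqrtd : GaussianInt) ^ j * (Zsqrtd.sqrtd : GaussianInt) ^ k *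
              (-(Zsqrtd.sqrtd : GaussianInt)) ^ j
            = ((Zsqrtd.sqrtd : GaussianInt) ^ j * (-(Zsqrtd.sqrtd : GaussianInt)) ^ j) *
              (Zsqrtd.sqrtd : GaussianInt) ^ k from by ring, hIpow_negpow, one_mul]
        have e2 : (Zsqrtd.sqrtd : GaussianInt) ^ j * (-(Zsqrtd.sqrtd : GaussianInt)) ^ (j + k)
            = (-(Zsqrtd.sqrtd : GaussianInt)) ^ k := by
          rw [pow_add, show (Zsqrtd.sqrtd : GaussianInt) ^ j * ((-(Zsqrtd.sqrtd : GaussianInt)) ^ j *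
              (-(Zsqrtd.sqrtd : GaussianInt)) ^ k)
            = ((Zsqrtd.sqrtd : GaussianInt) ^ j * (-(Zsqrtd.sqrtd : GaussianInt)) ^ j) *
              (-(Zsqrtd.sqrtd : GaussianInt)) ^ k from by ring, hIpow_negpow, one_mul]
        calc ((a (j + k) : GaussianInt) * (Zsqrtd.sqrtd : GaussianInt) ^ (j + k)) *
              ((a j : GaussianInt) * (-(Zsqrtd.sqrtd : GaussianInt)) ^ j)
            + ((a j : GaussianInt) * (Zsqrtd.sqrtd : GaussianInt) ^ j) *
              ((a (j + k) : GaussianInt) * (-(Zsqrtd.sqrtd : GaussianInt)) ^ (j + k))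
            = ((a j : GaussianInt) * (a (j + k) : GaussianInt)) *
                ((Zsqrtd.sqrtd : GaussianInt) ^ (j + k) * (-(Zsqrtd.sqrtd : GaussianInt)) ^ j)
              + ((a j : GaussianInt) * (a (j + k) : GaussianInt)) *
                ((Zsqrtd.sqrtd : GaussianInt) ^ j * (-(Zsqrtd.sqrtd : GaussianInt)) ^ (j + k)) := by
              ring
          _ = ((a j * a (j + k) : ℤ) : GaussianInt) *
              ((Zsqrtd.sqrtd : GaussianInt) ^ k + (-(Zsqrtd.sqrtd : GaussianInt)) ^ k) := by
              rw [e1, e2]; push_cast; ring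
      rw [Finset.sum_congr rfl (fun j _ => hterm2 j), ← Finset.sum_mul]
      rcases Nat.even_or_odd k with hke | hko
      · have hke' : k % 2 = 0 := Nat.even_iff.mp hke
        have hsum : ∑ j ∈ Finset.Icc 1 (n - k), ((a j * a (j + k) : ℤ) : GaussianInt)
            = ((C k : ℤ) : GaussianInt) := by
          rw [show C k = ∑ j ∈ Finset.Icc 1 (n - k), a j * a (j + k) from rfl]
          push_cast
          rfl
        rw [hsum, heven0 k (by omega) (by omega) hke']
        simp
      · rw [hko.neg_pow]
        simp
    rw [Finset.sum_eq_zero hcross, add_zero, hdiag]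
  -- z * star z = M
  have hee : (ε : GaussianInt) * (ε : GaussianInt) = 1 := by exact_mod_cast hε2
  have hunit : (1 + (ε : GaussianInt) * Zsqrtd.sqrtd) * star (1 + (ε : GaussianInt) * Zsqrtd.sqrtd)
      = 2 := by
    rw [star_add, star_one, star_mul', star_intCast, starI]
    have hh : (1 + (ε : GaussianInt) * Zsqrtd.sqrtd) * (1 + (ε : GaussianInt) * -Zsqrtd.sqrtd)
        = 1 - ((ε : GaussianInt) * (ε : GaussianInt)) * (Zsqrtd.sqrtd * Zsqrtd.sqrtd) := by ring
    rw [hh, hee, hI2]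
    ring
  have hzz : z * star z = ((M : ℤ) : GaussianInt) := by
    have h2 : (2 : GaussianInt) * (z * star z) = 2 * ((M : ℤ) : GaussianInt) := by
      have : F * star F = ((1 + (ε : GaussianInt) * Zsqrtd.sqrtd) *
          star (1 + (ε : GaussianInt) * Zsqrtd.sqrtd)) * (z * star z) := by
        rw [hFz, star_mul']
        ring
      rw [hunit] at this
      rw [← this, hFF]
      have hnm : (n : ℤ) = 2 * (M : ℤ) := by omega
      rw [hnm]
      push_cast
      ring
    exact mul_left_cancel₀ h20 h2
  -- the three-way split evaluations (T, S1, S2)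
  have hTval : ∀ k, k % 2 = 1 → 1 ≤ k → k ≤ M - 1 →
      ∑ j ∈ Finset.Icc (M - k + 1) M, (-1 : ℤ) ^ j * (a j * a (2 * M + 1 - k - j)) = 1 := by
    intro k hk1 hk2 hk3
    have hCk : C k = ε := hlow k hk1 (by omega)
    have hsplit : C k = (∑ j ∈ Finset.Icc 1 (M - k), a j * a (j + k))
        + ((∑ j ∈ Finset.Icc (M - k + 1) M, a j * a (j + k))
        + (∑ j ∈ Finset.Icc (M + 1) (n - k), a j * a (j + k))) := by
      rw [show C k = ∑ j ∈ Finset.Icc 1 (n - k), a j * a (j + k) from rfl, hIoc,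
        ← Finset.sum_Ioc_consecutive _ (show (0:ℕ) ≤ M - k from by omega) (show M - k ≤ n - k from by omega),
        ← Finset.sum_Ioc_consecutive _ (show (M - k : ℕ) ≤ M from by omega) (show M ≤ n - k from by omega),
        ← hIoc, ← Finset.Icc_add_one_left_eq_Ioc, ← Finset.Icc_add_one_left_eq_Ioc]
    have hsign2 : ∀ α β : ℕ, (α + β) % 2 = 1 → (-1 : ℤ) ^ α * (-1) ^ β = -1 := by
      intro α β hab
      rw [← pow_add, neg_one_pow_congr' (α + β) 1 (by omega), pow_one]
    have hthird : (∑ j ∈ Finset.Icc (M + 1) (n - k), a j * a (j + k))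
        = ∑ j ∈ Finset.Icc 1 (M - k), -(a j * a (j + k)) := by
      refine Finset.sum_nbij' (fun j => n + 1 - k - j) (fun j => n + 1 - k - j) ?_ ?_ ?_ ?_ ?_
      · intro j hj; simp only [Finset.mem_Icc] at *; omega
      · intro j hj; simp only [Finset.mem_Icc] at *; omega
      · intro j hj; simp only [Finset.mem_Icc] at hj
        show n + 1 - k - (n + 1 - k - j) = j
        omega
      · intro j hj; simp only [Finset.mem_Icc] at hj
        show n + 1 - k - (n + 1 - k - j) = j
        omega
      · intro j hj
        simp only [Finset.mem_Icc] at hj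
        show a j * a (j + k) = -(a (n + 1 - k - j) * a ((n + 1 - k - j) + k))
        have e1 : a j = ε * (-1 : ℤ) ^ (n + 1 - j) * a (n + 1 - j) := by
          have h := hsym (n + 1 - j) (by omega) (by omega)
          rw [show n + 1 - (n + 1 - j) = j from by omega] at h
          exact h
        have e2 : a (j + k) = ε * (-1 : ℤ) ^ (n + 1 - j - k) * a (n + 1 - j - k) := by
          have h := hsym (n + 1 - j - k) (by omega) (by omega)
          rw [show n + 1 - (n + 1 - j - k) = j + k from by omega] at h
          exact h
        rw [e1, e2, show n + 1 - k - j = n + 1 - j - k from by omega,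
          show (n + 1 - j - k) + k = n + 1 - j from by omega]
        have h3 : (-1 : ℤ) ^ (n + 1 - j) * (-1) ^ (n + 1 - j - k) = -1 := hsign2 _ _ (by omega)
        calc (ε * (-1 : ℤ) ^ (n + 1 - j) * a (n + 1 - j)) * (ε * (-1) ^ (n + 1 - j - k) * a (n + 1 - j - k))
            = (ε * ε) * ((-1 : ℤ) ^ (n + 1 - j) * (-1) ^ (n + 1 - j - k)) * (a (n + 1 - j) * a (n + 1 - j - k)) := by
              ring
          _ = -(a (n + 1 - j - k) * a (n + 1 - j)) := by rw [hε2, h3]; ring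
    have hmiddle : (∑ j ∈ Finset.Icc (M - k + 1) M, a j * a (j + k))
        = ε * ∑ j ∈ Finset.Icc (M - k + 1) M, (-1 : ℤ) ^ j * (a j * a (2 * M + 1 - k - j)) := by
      rw [Finset.mul_sum]
      refine Finset.sum_congr rfl (fun j hj => ?_)
      simp only [Finset.mem_Icc] at hj
      have h := hsym (2 * M + 1 - k - j) (by omega) (by omega)
      rw [show n + 1 - (2 * M + 1 - k - j) = j + k from by omega] at h
      rw [h, neg_one_pow_congr' (2 * M + 1 - k - j) j (by omega)]
      ring
    have hB : (∑ j ∈ Finset.Icc (M - k + 1) M, a j * a (j + k)) = ε := by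
      rw [hthird] at hsplit
      rw [Finset.sum_neg_distrib] at hsplit
      rw [hCk] at hsplit
      linarith
    rw [hB] at hmiddle
    rcases hε with h | h <;> rw [h] at hmiddle <;> linarith
  have hS2val : ∀ k, k % 2 = 1 → 1 ≤ k → k ≤ M - 1 →
      ∑ j ∈ Finset.Icc 1 (M - k), (-1 : ℤ) ^ j * (a j * a (M + 1 - (j + k))) = -1 := by
    intro k hk1 hk2 hk3
    have hCk : C (M + k) = -ε := hhigh (M + k) (by omega) (by omega) (by omega)
    have hC2 : C (M + k) = ∑ j ∈ Finset.Icc 1 (M - k), a j * a (j + (M + k)) := by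
      rw [show C (M + k) = ∑ j ∈ Finset.Icc 1 (n - (M + k)), a j * a (j + (M + k)) from rfl,
        show n - (M + k) = M - k from by omega]
    have hC3 : C (M + k) = ε * ∑ j ∈ Finset.Icc 1 (M - k), (-1 : ℤ) ^ j * (a j * a (M + 1 - (j + k))) := by
      rw [hC2, Finset.mul_sum]
      refine Finset.sum_congr rfl (fun j hj => ?_)
      simp only [Finset.mem_Icc] at hj
      have h := hsym (M + 1 - (j + k)) (by omega) (by omega)
      rw [show n + 1 - (M + 1 - (j + k)) = j + (M + k) from by omega] at h
      rw [h, neg_one_pow_congr' (M + 1 - (j + k)) j (by omega)]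
      ring
    rw [hCk] at hC3
    rcases hε with h | h <;> rw [h] at hC3 <;> linarith
  have hS1val : ∀ k, k % 2 = 1 → 1 ≤ k → k ≤ M - 1 →
      ∑ j ∈ Finset.Icc 1 (M - k), (-1 : ℤ) ^ j * (a (j + k) * a (M + 1 - j)) = -1 := by
    intro k hk1 hk2 hk3
    have hT := hTval (M - k) (by omega) (by omega) (by omega)
    have hre : ∑ j ∈ Finset.Icc 1 (M - k), (-1 : ℤ) ^ j * (a (j + k) * a (M + 1 - j))
        = ∑ i ∈ Finset.Icc (M - (M - k) + 1) M, -((-1 : ℤ) ^ i * (a i * a (2 * M + 1 - (M - k) - i))) := by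
      refine Finset.sum_nbij' (fun j => M + 1 - j) (fun i => M + 1 - i) ?_ ?_ ?_ ?_ ?_
      · intro j hj; simp only [Finset.mem_Icc] at *; omega
      · intro i hi; simp only [Finset.mem_Icc] at *; omega
      · intro j hj; simp only [Finset.mem_Icc] at hj
        show M + 1 - (M + 1 - j) = j
        omega
      · intro i hi; simp only [Finset.mem_Icc] at hi
        show M + 1 - (M + 1 - i) = i
        omega
      · intro j hj
        simp only [Finset.mem_Icc] at hj
        show (-1 : ℤ) ^ j * (a (j + k) * a (M + 1 - j))
          = -((-1 : ℤ) ^ (M + 1 - j) * (a (M + 1 - j) * a (2 * M + 1 - (M - k) - (M + 1 - j))))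
        rw [show 2 * M + 1 - (M - k) - (M + 1 - j) = j + k from by omega,
          neg_one_pow_congr' (M + 1 - j) (j + 1) (by omega), pow_succ]
        ring
    rw [hre, Finset.sum_neg_distrib, hT]
  -- final phase: the reversed-alternating evaluation
  have hpow2 : ∀ t, t ≤ M → (Zsqrtd.sqrtd : GaussianInt) ^ (M + 1) * (-(Zsqrtd.sqrtd : GaussianInt)) ^ t
      = (Zsqrtd.sqrtd : GaussianInt) ^ (M + 1 - t) := by
    intro t ht
    calc (Zsqrtd.sqrtd : GaussianInt) ^ (M + 1) * (-(Zsqrtd.sqrtd : GaussianInt)) ^ t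
        = (Zsqrtd.sqrtd : GaussianInt) ^ (M + 1) * (Zsqrtd.sqrtd : GaussianInt) ^ t *
            (Zsqrtd.sqrtd : GaussianInt) ^ t * (Zsqrtd.sqrtd : GaussianInt) ^ t := by
          rw [show (-(Zsqrtd.sqrtd : GaussianInt)) = (-1) * Zsqrtd.sqrtd from by ring, mul_pow,
            show ((-1 : GaussianInt)) = Zsqrtd.sqrtd * Zsqrtd.sqrtd from hI2.symm, mul_pow]
          ring
      _ = (Zsqrtd.sqrtd : GaussianInt) ^ (M + 1 + t + t + t) := by
          rw [← pow_add, ← pow_add, ← pow_add]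
      _ = (Zsqrtd.sqrtd : GaussianInt) ^ ((M + 1 - t) + 4 * t) := by
          congr 1
          omega
      _ = (Zsqrtd.sqrtd : GaussianInt) ^ (M + 1 - t) * ((Zsqrtd.sqrtd : GaussianInt) ^ 4) ^ t := by
          rw [pow_add, pow_mul]
      _ = (Zsqrtd.sqrtd : GaussianInt) ^ (M + 1 - t) := by rw [hI4, one_pow, mul_one]
  set cf : ℕ → GaussianInt :=
    fun v => (((-1 : ℤ) ^ v * a (M + 1 - v) : ℤ) : GaussianInt) * (-(Zsqrtd.sqrtd : GaussianInt)) ^ v with hcf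
  set cg : ℕ → GaussianInt :=
    fun v => (((-1 : ℤ) ^ v * a (M + 1 - v) : ℤ) : GaussianInt) * (Zsqrtd.sqrtd : GaussianInt) ^ v with hcg
  have hstarcf : ∀ v, star (cf v) = cg v := by
    intro v
    simp only [hcf, hcg]
    rw [star_mul', star_pow, star_neg, starI, neg_neg, star_intCast]
  have hstarz' : star z = ∑ t ∈ Finset.Icc 1 M, (a t : GaussianInt) * (-(Zsqrtd.sqrtd : GaussianInt)) ^ t := by
    rw [hz, star_sum]
    refine Finset.sum_congr rfl (fun t _ => ?_)
    rw [star_mul', star_pow, starI, star_intCast]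
  have hcsimp : ∀ v, cf v = (a (M + 1 - v) : GaussianInt) * (Zsqrtd.sqrtd : GaussianInt) ^ v := by
    intro v
    simp only [hcf]
    push_cast
    rw [show ((-1 : GaussianInt)) ^ v * (a (M + 1 - v) : GaussianInt) * (-(Zsqrtd.sqrtd : GaussianInt)) ^ v
        = (a (M + 1 - v) : GaussianInt) * (((-1 : GaussianInt)) ^ v * (-(Zsqrtd.sqrtd : GaussianInt)) ^ v) from by
        ring,
      ← mul_pow, show ((-1 : GaussianInt)) * (-(Zsqrtd.sqrtd : GaussianInt)) = Zsqrtd.sqrtd from by ring]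
  have hw : ∑ v ∈ Finset.Icc 1 M, cf v = (Zsqrtd.sqrtd : GaussianInt) ^ (M + 1) * star z := by
    calc ∑ v ∈ Finset.Icc 1 M, cf v
        = ∑ v ∈ Finset.Icc 1 M, (a (M + 1 - v) : GaussianInt) * (Zsqrtd.sqrtd : GaussianInt) ^ v :=
          Finset.sum_congr rfl (fun v _ => hcsimp v)
      _ = ∑ t ∈ Finset.Icc 1 M, (a (M + 1 - (M + 1 - t)) : GaussianInt) * (Zsqrtd.sqrtd : GaussianInt) ^ (M + 1 - t) :=
          sum_reflect _ M
      _ = ∑ t ∈ Finset.Icc 1 M, (Zsqrtd.sqrtd : GaussianInt) ^ (M + 1) *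
            ((a t : GaussianInt) * (-(Zsqrtd.sqrtd : GaussianInt)) ^ t) := by
          refine Finset.sum_congr rfl (fun t ht => ?_)
          simp only [Finset.mem_Icc] at ht
          rw [show M + 1 - (M + 1 - t) = t from by omega, ← hpow2 t (by omega)]
          ring
      _ = (Zsqrtd.sqrtd : GaussianInt) ^ (M + 1) * star z := by rw [hstarz', Finset.mul_sum]
  have hzw : z * (∑ v ∈ Finset.Icc 1 M, cf v)
      = (Zsqrtd.sqrtd : GaussianInt) ^ (M + 1) * ((M : ℤ) : GaussianInt) := by
    rw [hw, show z * ((Zsqrtd.sqrtd : GaussianInt) ^ (M + 1) * star z)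
        = (Zsqrtd.sqrtd : GaussianInt) ^ (M + 1) * (z * star z) from by ring, hzz]
  have hoddM1 : Odd (M + 1) := ⟨M / 2, by omega⟩
  have hstarzw : star (z * ∑ v ∈ Finset.Icc 1 M, cf v)
      = -((Zsqrtd.sqrtd : GaussianInt) ^ (M + 1) * ((M : ℤ) : GaussianInt)) := by
    rw [hzw, star_mul', star_pow, starI, star_intCast, hoddM1.neg_pow]
    ring
  -- the G1 comparison
  have hQ2 : z * (∑ v ∈ Finset.Icc 1 M, cf v) - star (z * ∑ v ∈ Finset.Icc 1 M, cf v)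
      = ∑ k ∈ Finset.Icc 1 (M - 1), qfun k := by
    have hstar_prod : star (z * ∑ v ∈ Finset.Icc 1 M, cf v)
        = (∑ t ∈ Finset.Icc 1 M, (a t : GaussianInt) * (-(Zsqrtd.sqrtd : GaussianInt)) ^ t) *
          (∑ v ∈ Finset.Icc 1 M, cg v) := by
      rw [star_mul', hstarz', star_sum]
      congr 1
      exact Finset.sum_congr rfl (fun v _ => hstarcf v)
    rw [hstar_prod, hz,
      sum_mul_sum_corr (fun t => (a t : GaussianInt) * (Zsqrtd.sqrtd : GaussianInt) ^ t) cf M,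
      sum_mul_sum_corr (fun t => (a t : GaussianInt) * (-(Zsqrtd.sqrtd : GaussianInt)) ^ t) cg M]
    beta_reduce
    have hdiag2 : ∑ j ∈ Finset.Icc 1 M, ((a j : GaussianInt) * (Zsqrtd.sqrtd : GaussianInt) ^ j) * cf j
        = ∑ j ∈ Finset.Icc 1 M, ((a j : GaussianInt) * (-(Zsqrtd.sqrtd : GaussianInt)) ^ j) * cg j := by
      refine Finset.sum_congr rfl (fun j _ => ?_)
      simp only [hcf, hcg]
      ring
    rw [hdiag2]
    have hkey : ∀ k ∈ Finset.Icc 1 (M - 1),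
        (∑ j ∈ Finset.Icc 1 (M - k),
          (((a (j + k) : GaussianInt) * (Zsqrtd.sqrtd : GaussianInt) ^ (j + k)) * cf j
            + ((a j : GaussianInt) * (Zsqrtd.sqrtd : GaussianInt) ^ j) * cf (j + k)))
        - (∑ j ∈ Finset.Icc 1 (M - k),
          (((a (j + k) : GaussianInt) * (-(Zsqrtd.sqrtd : GaussianInt)) ^ (j + k)) * cg j
            + ((a j : GaussianInt) * (-(Zsqrtd.sqrtd : GaussianInt)) ^ j) * cg (j + k)))
        = qfun k := by
      intro k hk
      simp only [Finset.mem_Icc] at hk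
      have e1 : ∀ j : ℕ, (Zsqrtd.sqrtd : GaussianInt) ^ (j + k) * (-(Zsqrtd.sqrtd : GaussianInt)) ^ j
          = (Zsqrtd.sqrtd : GaussianInt) ^ k := fun j =>
        pow_collapse _ _ hInegI j k
      have e3 : ∀ j : ℕ, (-(Zsqrtd.sqrtd : GaussianInt)) ^ (j + k) * (Zsqrtd.sqrtd : GaussianInt) ^ j
          = (-(Zsqrtd.sqrtd : GaussianInt)) ^ k := fun j =>
        pow_collapse _ _ negII j k
      rcases Nat.even_or_odd k with hke | hko
      · -- even k : both cross sums are equal, qfun k = 0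
        have hke' : k % 2 = 0 := Nat.even_iff.mp hke
        have hnegk : (-(Zsqrtd.sqrtd : GaussianInt)) ^ k = (Zsqrtd.sqrtd : GaussianInt) ^ k :=
          hke.neg_pow _
        have heq2 : ∀ j ∈ Finset.Icc 1 (M - k),
            ((a (j + k) : GaussianInt) * (Zsqrtd.sqrtd : GaussianInt) ^ (j + k)) * cf j
              + ((a j : GaussianInt) * (Zsqrtd.sqrtd : GaussianInt) ^ j) * cf (j + k)
            = ((a (j + k) : GaussianInt) * (-(Zsqrtd.sqrtd : GaussianInt)) ^ (j + k)) * cg j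
              + ((a j : GaussianInt) * (-(Zsqrtd.sqrtd : GaussianInt)) ^ j) * cg (j + k) := by
          intro j _
          simp only [hcf, hcg]
          calc ((a (j + k) : GaussianInt) * (Zsqrtd.sqrtd : GaussianInt) ^ (j + k)) *
                ((((-1 : ℤ) ^ j * a (M + 1 - j) : ℤ) : GaussianInt) * (-(Zsqrtd.sqrtd : GaussianInt)) ^ j)
              + ((a j : GaussianInt) * (Zsqrtd.sqrtd : GaussianInt) ^ j) *
                ((((-1 : ℤ) ^ (j + k) * a (M + 1 - (j + k)) : ℤ) : GaussianInt) * (-(Zsqrtd.sqrtd : GaussianInt)) ^ (j + k))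
              = ((a (j + k) : GaussianInt) * (((-1 : ℤ) ^ j * a (M + 1 - j) : ℤ) : GaussianInt)) *
                  ((Zsqrtd.sqrtd : GaussianInt) ^ (j + k) * (-(Zsqrtd.sqrtd : GaussianInt)) ^ j)
                + ((a j : GaussianInt) * (((-1 : ℤ) ^ (j + k) * a (M + 1 - (j + k)) : ℤ) : GaussianInt)) *
                  ((-(Zsqrtd.sqrtd : GaussianInt)) ^ (j + k) * (Zsqrtd.sqrtd : GaussianInt) ^ j) := by
                ring
            _ = ((a (j + k) : GaussianInt) * (((-1 : ℤ) ^ j * a (M + 1 - j) : ℤ) : GaussianInt)) *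
                  (Zsqrtd.sqrtd : GaussianInt) ^ k
                + ((a j : GaussianInt) * (((-1 : ℤ) ^ (j + k) * a (M + 1 - (j + k)) : ℤ) : GaussianInt)) *
                  (-(Zsqrtd.sqrtd : GaussianInt)) ^ k := by rw [e1, e3]
            _ = ((a (j + k) : GaussianInt) * (((-1 : ℤ) ^ j * a (M + 1 - j) : ℤ) : GaussianInt)) *
                  ((-(Zsqrtd.sqrtd : GaussianInt)) ^ (j + k) * (Zsqrtd.sqrtd : GaussianInt) ^ j)
                + ((a j : GaussianInt) * (((-1 : ℤ) ^ (j + k) * a (M + 1 - (j + k)) : ℤ) : GaussianInt)) *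
                  ((Zsqrtd.sqrtd : GaussianInt) ^ (j + k) * (-(Zsqrtd.sqrtd : GaussianInt)) ^ j) := by
                rw [e1, e3, hnegk]
            _ = _ := by ring
        rw [Finset.sum_congr rfl heq2, sub_self]
        have hq0 : qfun k = 0 := by
          simp only [qfun]
          rw [if_neg (by omega), if_neg (by omega)]
        rw [hq0]
      · -- odd k
        have hko' : k % 2 = 1 := Nat.odd_iff.mp hko
        have hS1 := hS1val k hko' (by omega) (by omega)
        have hS2 := hS2val k hko' (by omega) (by omega)
        have hnegk : (-(Zsqrtd.sqrtd : GaussianInt)) ^ k = -((Zsqrtd.sqrtd : GaussianInt) ^ k) :=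
          hko.neg_pow _
        rw [← Finset.sum_sub_distrib]
        have hterm3 : ∀ j ∈ Finset.Icc 1 (M - k),
            (((a (j + k) : GaussianInt) * (Zsqrtd.sqrtd : GaussianInt) ^ (j + k)) * cf j
              + ((a j : GaussianInt) * (Zsqrtd.sqrtd : GaussianInt) ^ j) * cf (j + k))
            - (((a (j + k) : GaussianInt) * (-(Zsqrtd.sqrtd : GaussianInt)) ^ (j + k)) * cg j
              + ((a j : GaussianInt) * (-(Zsqrtd.sqrtd : GaussianInt)) ^ j) * cg (j + k))
            = (2 * (Zsqrtd.sqrtd : GaussianInt) ^ k) *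
              ((((-1 : ℤ) ^ j * (a (j + k) * a (M + 1 - j))
                + (-1 : ℤ) ^ j * (a j * a (M + 1 - (j + k)))) : ℤ) : GaussianInt) := by
          intro j _
          simp only [hcf, hcg]
          have hsgn : (-1 : ℤ) ^ (j + k) = -((-1 : ℤ) ^ j) := by
            rw [pow_add, hko.neg_one_pow]
            ring
          rw [hsgn]
          calc ((a (j + k) : GaussianInt) * (Zsqrtd.sqrtd : GaussianInt) ^ (j + k)) *
                (((((-1 : ℤ) ^ j * a (M + 1 - j)) : ℤ) : GaussianInt) * (-(Zsqrtd.sqrtd : GaussianInt)) ^ j)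
              + ((a j : GaussianInt) * (Zsqrtd.sqrtd : GaussianInt) ^ j) *
                (((-((-1 : ℤ) ^ j) * a (M + 1 - (j + k)) : ℤ) : GaussianInt) * (-(Zsqrtd.sqrtd : GaussianInt)) ^ (j + k))
              - (((a (j + k) : GaussianInt) * (-(Zsqrtd.sqrtd : GaussianInt)) ^ (j + k)) *
                  (((((-1 : ℤ) ^ j * a (M + 1 - j)) : ℤ) : GaussianInt) * (Zsqrtd.sqrtd : GaussianInt) ^ j)
                + ((a j : GaussianInt) * (-(Zsqrtd.sqrtd : GaussianInt)) ^ j) *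
                  (((-((-1 : ℤ) ^ j) * a (M + 1 - (j + k)) : ℤ) : GaussianInt) * (Zsqrtd.sqrtd : GaussianInt) ^ (j + k)))
              = ((a (j + k) : GaussianInt) * ((((-1 : ℤ) ^ j * a (M + 1 - j)) : ℤ) : GaussianInt)) *
                  ((Zsqrtd.sqrtd : GaussianInt) ^ (j + k) * (-(Zsqrtd.sqrtd : GaussianInt)) ^ j)
                - ((a j : GaussianInt) * ((((-1 : ℤ) ^ j * a (M + 1 - (j + k))) : ℤ) : GaussianInt)) *
                  ((-(Zsqrtd.sqrtd : GaussianInt)) ^ (j + k) * (Zsqrtd.sqrtd : GaussianInt) ^ j)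
                - ((a (j + k) : GaussianInt) * ((((-1 : ℤ) ^ j * a (M + 1 - j)) : ℤ) : GaussianInt)) *
                  ((-(Zsqrtd.sqrtd : GaussianInt)) ^ (j + k) * (Zsqrtd.sqrtd : GaussianInt) ^ j)
                + ((a j : GaussianInt) * ((((-1 : ℤ) ^ j * a (M + 1 - (j + k))) : ℤ) : GaussianInt)) *
                  ((Zsqrtd.sqrtd : GaussianInt) ^ (j + k) * (-(Zsqrtd.sqrtd : GaussianInt)) ^ j) := by
                push_cast
                ring
            _ = (2 * (Zsqrtd.sqrtd : GaussianInt) ^ k) *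
              ((((-1 : ℤ) ^ j * (a (j + k) * a (M + 1 - j))
                + (-1 : ℤ) ^ j * (a j * a (M + 1 - (j + k)))) : ℤ) : GaussianInt) := by
                rw [e1, e3, hnegk]
                push_cast
                ring
        rw [Finset.sum_congr rfl hterm3, ← Finset.mul_sum]
        have hz2 : ∑ j ∈ Finset.Icc 1 (M - k),
            ((-1 : ℤ) ^ j * (a (j + k) * a (M + 1 - j)) + (-1 : ℤ) ^ j * (a j * a (M + 1 - (j + k)))) = -2 := by
          rw [Finset.sum_add_distrib, hS1, hS2]
          norm_num
        have hsum2 : ∑ j ∈ Finset.Icc 1 (M - k),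
            ((((-1 : ℤ) ^ j * (a (j + k) * a (M + 1 - j))
              + (-1 : ℤ) ^ j * (a j * a (M + 1 - (j + k)))) : ℤ) : GaussianInt)
            = ((-2 : ℤ) : GaussianInt) := by
          rw [← Int.cast_sum, hz2]
        rw [hsum2]
        have h4' : k % 4 = 1 ∨ k % 4 = 3 := by omega
        rcases h4' with h | h
        · have hIk : (Zsqrtd.sqrtd : GaussianInt) ^ k = Zsqrtd.sqrtd := by
            rw [hIpow, h, pow_one]
          rw [hIk]
          simp only [qfun]
          rw [if_pos h]
          push_cast
          ring
        · have hIk : (Zsqrtd.sqrtd : GaussianInt) ^ k = -Zsqrtd.sqrtd := by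
            rw [hIpow, h, hI3]
          rw [hIk]
          simp only [qfun]
          rw [if_neg (by omega), if_pos h]
          push_cast
          ring
    calc (∑ j ∈ Finset.Icc 1 M, ((a j : GaussianInt) * (-(Zsqrtd.sqrtd : GaussianInt)) ^ j) * cg j)
          + (∑ k ∈ Finset.Icc 1 (M - 1), ∑ j ∈ Finset.Icc 1 (M - k),
            (((a (j + k) : GaussianInt) * (Zsqrtd.sqrtd : GaussianInt) ^ (j + k)) * cf j
              + ((a j : GaussianInt) * (Zsqrtd.sqrtd : GaussianInt) ^ j) * cf (j + k)))
          - ((∑ j ∈ Finset.Icc 1 M, ((a j : GaussianInt) * (-(Zsqrtd.sqrtd : GaussianInt)) ^ j) * cg j)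
          + (∑ k ∈ Finset.Icc 1 (M - 1), ∑ j ∈ Finset.Icc 1 (M - k),
            (((a (j + k) : GaussianInt) * (-(Zsqrtd.sqrtd : GaussianInt)) ^ (j + k)) * cg j
              + ((a j : GaussianInt) * (-(Zsqrtd.sqrtd : GaussianInt)) ^ j) * cg (j + k))))
        = ∑ k ∈ Finset.Icc 1 (M - 1),
            ((∑ j ∈ Finset.Icc 1 (M - k),
              (((a (j + k) : GaussianInt) * (Zsqrtd.sqrtd : GaussianInt) ^ (j + k)) * cf j
                + ((a j : GaussianInt) * (Zsqrtd.sqrtd : GaussianInt) ^ j) * cf (j + k)))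
            - (∑ j ∈ Finset.Icc 1 (M - k),
              (((a (j + k) : GaussianInt) * (-(Zsqrtd.sqrtd : GaussianInt)) ^ (j + k)) * cg j
                + ((a j : GaussianInt) * (-(Zsqrtd.sqrtd : GaussianInt)) ^ j) * cg (j + k)))) := by
          rw [Finset.sum_sub_distrib]
          ring
      _ = ∑ k ∈ Finset.Icc 1 (M - 1), qfun k := Finset.sum_congr rfl hkey
  -- assemble and extract components
  have hfinal : 2 * ((Zsqrtd.sqrtd : GaussianInt) ^ (M + 1) * ((M : ℤ) : GaussianInt))
      = ∑ k ∈ Finset.Icc 1 (M - 1), qfun k := by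
    rw [← hQ2, hstarzw, hzw]
    ring
  rw [sumq (M - 1)] at hfinal
  rcases (show M % 4 = 0 ∨ M % 4 = 2 from by omega) with h4 | h4
  · exfalso
    have hcond : ¬((M - 1) % 4 = 1 ∨ (M - 1) % 4 = 2) := by omega
    rw [if_neg hcond] at hfinal
    have hIM : (Zsqrtd.sqrtd : GaussianInt) ^ (M + 1) = Zsqrtd.sqrtd := by
      rw [hIpow, show (M + 1) % 4 = 1 from by omega, pow_one]
    rw [hIM] at hfinal
    have him := congrArg Zsqrtd.im hfinal
    simp [Zsqrtd.im_mul, Zsqrtd.re_mul] at him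
    omega
  · have hcond : (M - 1) % 4 = 1 ∨ (M - 1) % 4 = 2 := by omega
    rw [if_pos hcond] at hfinal
    have hIM : (Zsqrtd.sqrtd : GaussianInt) ^ (M + 1) = -Zsqrtd.sqrtd := by
      rw [hIpow, show (M + 1) % 4 = 3 from by omega, hI3]
    rw [hIM] at hfinal
    have him := congrArg Zsqrtd.im hfinal
    simp [Zsqrtd.im_mul, Zsqrtd.re_mul] at him
    omega
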